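/- For every integer m ≥ 1, the operator 𝓛 maps 𝓕_w^m into 𝓕_w^{m−1}: if f ∈ 𝓕_w^m, then 𝓛f ∈ 𝓕_w^{m−1} (where 𝓕_w^0 = 𝓡_w). In particular, if the principal term of f is p(ℓ)e^ℓ with deg p < m, then the principal term of 𝓛f is a polynomial of degree < m−1 times e^ℓ. -/

import Mathlib

open MeasureTheory Real Set

noncomputable section

/-- The class `𝓡_w^c`: continuous functions on `[0,∞)` whose integral of the modulus up to `n`
is `≤ c₁ (n+1)^c e^{n/2}` for every integer `n ≥ 1`. -/
def memRwC (c : ℝ) (f : ℝ → ℂ) : Prop :=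
  ContinuousOn f (Set.Ici 0) ∧
  ∃ c₁ : ℝ, 0 < c₁ ∧ ∀ n : ℕ, 1 ≤ n →
    (∫ s in (0:ℝ)..(n:ℝ), ‖f s‖) ≤ c₁ * ((n:ℝ) + 1) ^ c * Real.exp ((n:ℝ) / 2)

/-- The class `𝓡_w = ⋃_{c ≥ 0} 𝓡_w^c`. -/
def memRw (f : ℝ → ℂ) : Prop := ∃ c : ℝ, 0 ≤ c ∧ memRwC c f

/-- The class `𝓕_w^m` of weak Friedman–Ramanujan functions with polynomial part of
degree `< m` (so `𝓕_w^0 = 𝓡_w`). -/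
def memFw (m : ℕ) (f : ℝ → ℂ) : Prop :=
  ContinuousOn f (Set.Ici 0) ∧
  ∃ p : Polynomial ℂ, p.degree < (m : ℕ) ∧
    memRw (fun ℓ : ℝ => f ℓ - p.eval (ℓ : ℂ) * Complex.exp ℓ)

/-- The primitive operator `𝒫 f (x) = ∫₀ˣ f(t) dt`. -/
def Pop (f : ℝ → ℂ) : ℝ → ℂ := fun x => ∫ t in (0:ℝ)..x, f t

/-- The operator `𝓛 = Id − 𝒫`. -/
def Lop (f : ℝ → ℂ) : ℝ → ℂ := fun x => f x - Pop f x

open Polynomial in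
/-- Existence of a polynomial solution to `P + P' = p`. -/
lemma exists_antideriv : ∀ (n : ℕ) (p : ℂ[X]), p.natDegree ≤ n →
    ∃ P : ℂ[X], P + derivative P = p ∧ P.degree ≤ p.degree := by
  intro n
  induction n with
  | zero =>
    intro p hp
    refine ⟨p, ?_, le_rfl⟩
    have h0 : p = C (p.coeff 0) := p.eq_C_of_natDegree_le_zero hp
    rw [h0]; simp
  | succ n ih =>
    intro p hp
    obtain ⟨Q, hQ, hQdeg⟩ := ih (derivative p) (by
      have := p.natDegree_derivative_le
      omega)
    have h1 : derivative (p - Q) = Q := by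
      rw [derivative_sub, ← hQ]; ring
    refine ⟨p - Q, by rw [h1]; ring, ?_⟩
    refine le_trans (degree_sub_le _ _) (max_le le_rfl ?_)
    exact le_trans hQdeg (degree_derivative_le)

open Polynomial in
lemma integral_poly_exp (P : ℂ[X]) (x : ℝ) :
    (∫ t in (0:ℝ)..x, (P + derivative P).eval (t:ℂ) * Complex.exp t) =
      P.eval (x:ℂ) * Complex.exp x - P.eval 0 := by
  have hcont : Continuous fun t : ℝ => (P + derivative P).eval (t:ℂ) * Complex.exp t :=
    ((P + derivative P).continuous_aeval.comp Complex.continuous_ofReal).mul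
      (Complex.continuous_exp.comp Complex.continuous_ofReal)
  have key : ∀ t : ℝ, HasDerivAt (fun s : ℝ => P.eval (s:ℂ) * Complex.exp s)
      ((P + derivative P).eval (t:ℂ) * Complex.exp t) t := by
    intro t
    have h1 : HasDerivAt (fun z : ℂ => P.eval z * Complex.exp z)
        ((P + derivative P).eval (t:ℂ) * Complex.exp t) (t:ℂ) := by
      have h2 := (P.hasDerivAt (t:ℂ)).mul (Complex.hasDerivAt_exp (t:ℂ))
      rw [Polynomial.eval_add, add_mul, add_comm]; exact h2
    exact h1.comp_ofReal
  have h3 := intervalIntegral.integral_eq_sub_of_hasDerivAt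
    (f := fun s : ℝ => P.eval (s:ℂ) * Complex.exp s)
    (fun t _ => key t) (hcont.intervalIntegrable 0 x)
  simpa using h3

lemma Pop_continuousOn {f : ℝ → ℂ} (hf : ContinuousOn f (Set.Ici 0)) :
    ContinuousOn (Pop f) (Set.Ici 0) := by
  intro x hx
  have hx0 : (0:ℝ) ≤ x := hx
  have huIcc : Set.uIcc (0:ℝ) (x+1) = Set.Icc 0 (x+1) := Set.uIcc_of_le (by linarith)
  have hint : IntegrableOn f (Set.uIcc (0:ℝ) (x+1)) volume := by
    have hco : ContinuousOn f (Set.uIcc (0:ℝ) (x+1)) := by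
      refine hf.mono ?_
      rw [huIcc]; exact fun t ht => ht.1
    rw [huIcc] at hco ⊢
    exact hco.integrableOn_Icc
  have hc : ContinuousOn (Pop f) (Set.uIcc (0:ℝ) (x+1)) :=
    intervalIntegral.continuousOn_primitive_interval hint
  have hmemx : x ∈ Set.uIcc (0:ℝ) (x+1) := by
    rw [huIcc]; exact ⟨hx0, by linarith⟩
  have hmem : Set.uIcc (0:ℝ) (x+1) ∈ nhdsWithin x (Set.Ici 0) := by
    rw [huIcc, ← Set.Ici_inter_Iic]
    exact Filter.inter_mem self_mem_nhdsWithin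
      (mem_nhdsWithin_of_mem_nhds (Iic_mem_nhds (by linarith)))
  exact (hc x hmemx).mono_of_mem_nhdsWithin hmem

lemma memRw_congr {g h : ℝ → ℂ} (hgh : Set.EqOn g h (Set.Ici 0)) (hg : memRw g) : memRw h := by
  obtain ⟨c, hc, hcont, c₁, hc₁, hbd⟩ := hg
  refine ⟨c, hc, hcont.congr hgh.symm, c₁, hc₁, fun n hn => ?_⟩
  have hn0 : (0:ℝ) ≤ n := n.cast_nonneg
  have heq : (∫ s in (0:ℝ)..(n:ℝ), ‖h s‖)
      = ∫ s in (0:ℝ)..(n:ℝ), ‖g s‖ := by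
    refine intervalIntegral.integral_congr fun s hs => ?_
    rw [Set.uIcc_of_le hn0] at hs
    rw [hgh hs.1]
  rw [heq]; exact hbd n hn

lemma memRw_L {g : ℝ → ℂ} (hg : memRw g) (K : ℂ) :
    memRw (fun x => g x - Pop g x + K) := by
  obtain ⟨c, hc, hcont, c₁, hc₁, hbd⟩ := hg
  have hPcont := Pop_continuousOn hcont
  have hLcont : ContinuousOn (fun x => g x - Pop g x + K) (Set.Ici 0) :=
    (hcont.sub hPcont).add continuousOn_const
  refine ⟨c + 1, by linarith, hLcont, 2*c₁ + ‖K‖ + 1, by positivity, fun n hn => ?_⟩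
  have hn1 : (1:ℝ) ≤ n := by exact_mod_cast hn
  have hn0 : (0:ℝ) ≤ n := by linarith
  have hsub : Set.uIcc (0:ℝ) n ⊆ Set.Ici 0 := by
    rw [Set.uIcc_of_le hn0]; exact fun t ht => ht.1
  have hgint : IntervalIntegrable (fun s => ‖g s‖) volume 0 n :=
    (continuous_norm.comp_continuousOn (hcont.mono hsub)).intervalIntegrable
  have hgnint : IntervalIntegrable (fun s => ‖g s‖) volume 0 n := by
    exact hgint
  set A : ℝ := ∫ s in (0:ℝ)..(n:ℝ), ‖g s‖ with hA
  have hA0 : 0 ≤ A :=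
    intervalIntegral.integral_nonneg hn0 (fun s _ => norm_nonneg _)
  have hAbd : A ≤ c₁ * ((n:ℝ)+1)^c * Real.exp ((n:ℝ)/2) := hbd n hn
  have hPop : ∀ x ∈ Set.Icc (0:ℝ) n, ‖Pop g x‖ ≤ A := by
    intro x hx
    calc ‖Pop g x‖ = ‖∫ t in (0:ℝ)..x, g t‖ := rfl
      _ ≤ ∫ t in (0:ℝ)..x, ‖g t‖ := intervalIntegral.norm_integral_le_integral_norm hx.1
      _ ≤ ∫ t in (0:ℝ)..(n:ℝ), ‖g t‖ := by
          refine intervalIntegral.integral_mono_interval le_rfl hx.1 hx.2 ?_ hgnint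
          filter_upwards with t using norm_nonneg _
      _ = A := rfl
  have htri : ∀ x ∈ Set.Icc (0:ℝ) n,
      ‖g x - Pop g x + K‖ ≤ ‖g x‖ + (A + ‖K‖) := by
    intro x hx
    have h1 : ‖g x - Pop g x + K‖
        ≤ ‖g x‖ + ‖Pop g x‖ + ‖K‖ := by
      calc ‖g x - Pop g x + K‖
          ≤ ‖g x - Pop g x‖ + ‖K‖ := norm_add_le _ _
        _ ≤ ‖g x‖ + ‖Pop g x‖ + ‖K‖ := by
            have := norm_sub_le (g x) (Pop g x)
            linarith
    have := hPop x hx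
    linarith
  have hint1 : IntervalIntegrable (fun s => ‖g s - Pop g s + K‖) volume 0 n :=
    (continuous_norm.comp_continuousOn (hLcont.mono hsub)).intervalIntegrable
  have hint2 : IntervalIntegrable (fun s => ‖g s‖ + (A + ‖K‖))
      volume 0 n := hgint.add intervalIntegrable_const
  have h1 : (∫ s in (0:ℝ)..(n:ℝ), ‖g s - Pop g s + K‖)
      ≤ ∫ s in (0:ℝ)..(n:ℝ), (‖g s‖ + (A + ‖K‖)) :=
    intervalIntegral.integral_mono_on hn0 hint1 hint2 htri
  have h2 : (∫ s in (0:ℝ)..(n:ℝ), (‖g s‖ + (A + ‖K‖)))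
      = A + (A + ‖K‖) * n := by
    rw [intervalIntegral.integral_add hgint intervalIntegrable_const]
    simp [← hA]
    ring
  have hE1 : (1:ℝ) ≤ ((n:ℝ)+1)^c := Real.one_le_rpow (by linarith) hc
  have hF1 : (1:ℝ) ≤ Real.exp ((n:ℝ)/2) := by
    rw [← Real.exp_zero]; exact Real.exp_le_exp.mpr (by linarith)
  have hEadd : ((n:ℝ)+1)^(c+1) = ((n:ℝ)+1)^c * ((n:ℝ)+1) := by
    rw [Real.rpow_add (by linarith), Real.rpow_one]
  have hK0 : 0 ≤ ‖K‖ := norm_nonneg _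
  have hE0 : (0:ℝ) < ((n:ℝ)+1)^c := by linarith
  have hF0 : (0:ℝ) < Real.exp ((n:ℝ)/2) := Real.exp_pos _
  calc (∫ s in (0:ℝ)..(n:ℝ), ‖g s - Pop g s + K‖)
      ≤ A + (A + ‖K‖) * n := by rw [← h2]; exact h1
    _ ≤ (2*c₁ + ‖K‖ + 1) * ((n:ℝ)+1)^(c+1) * Real.exp ((n:ℝ)/2) := by
        rw [hEadd]
        set E : ℝ := ((n:ℝ)+1)^c
        set F : ℝ := Real.exp ((n:ℝ)/2)
        have hu : ((n:ℝ)+1) ≤ E*((n:ℝ)+1)*F := by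
          have h3 : ((n:ℝ)+1) ≤ E*((n:ℝ)+1) := le_mul_of_one_le_left (by linarith) hE1
          have h4 : E*((n:ℝ)+1) ≤ E*((n:ℝ)+1)*F :=
            le_mul_of_one_le_right (by positivity) hF1
          linarith
        have hKn : ‖K‖ * (n:ℝ) ≤ ‖K‖ * (E*((n:ℝ)+1)*F) :=
          mul_le_mul_of_nonneg_left (le_trans (by linarith) hu) hK0
        have hAm : A * (1+(n:ℝ)) ≤ c₁*E*F * (1+(n:ℝ)) :=
          mul_le_mul_of_nonneg_right hAbd (by linarith)
        have hunit : 0 ≤ E*((n:ℝ)+1)*F := by positivity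
        have hcu : 0 ≤ c₁ * (E*((n:ℝ)+1)*F) := by positivity
        nlinarith [hKn, hAm, hunit, hcu]

open Polynomial in
lemma deg_lt_aux {m : ℕ} (hm : 1 ≤ m) {P p : ℂ[X]} (hP : P.degree ≤ p.degree)
    (hp : p.degree < (m:ℕ)) :
    (derivative P).degree < ((m-1 : ℕ) : WithBot ℕ) := by
  rcases eq_or_ne P 0 with h | h
  · rw [h]; simp
  · have h1 := Polynomial.degree_derivative_lt h
    have h2 : P.degree < (m:ℕ) := lt_of_le_of_lt hP hp
    have h4 : P.degree = (P.natDegree : WithBot ℕ) := Polynomial.degree_eq_natDegree h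
    have h3 : P.natDegree < m := by
      rw [h4] at h2; exact_mod_cast h2
    calc (derivative P).degree < P.degree := h1
      _ = (P.natDegree : WithBot ℕ) := h4
      _ ≤ ((m-1 : ℕ) : WithBot ℕ) := by
          exact_mod_cast Nat.cast_le.mpr (by omega : P.natDegree ≤ m - 1)

/-- for `m ≥ 1`, the operator `𝓛` maps `𝓕_w^m` into `𝓕_w^{m−1}`
(where `𝓕_w^0 = 𝓡_w`). -/
theorem Lop_maps_Fw_to_Fw_pred (m : ℕ) (hm : 1 ≤ m) (f : ℝ → ℂ) (hf : memFw m f) :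
    memFw (m - 1) (Lop f) := by
  classical
  obtain ⟨hfc, p, hpdeg, hgRw⟩ := hf
  set g : ℝ → ℂ := fun ℓ => f ℓ - p.eval (ℓ:ℂ) * Complex.exp ℓ with hgdef
  obtain ⟨P, hPsum, hPdeg⟩ := exists_antideriv p.natDegree p le_rfl
  have hgcont : ContinuousOn g (Set.Ici 0) := hgRw.choose_spec.2.1
  have hLcont : ContinuousOn (Lop f) (Set.Ici 0) := hfc.sub (Pop_continuousOn hfc)
  refine ⟨hLcont, Polynomial.derivative P, deg_lt_aux hm hPdeg hpdeg, ?_⟩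
  refine memRw_congr (g := fun x => g x - Pop g x + P.eval 0) ?_ (memRw_L hgRw (P.eval 0))
  intro x hx
  have hx0 : (0:ℝ) ≤ x := hx
  have hsub : Set.uIcc (0:ℝ) x ⊆ Set.Ici 0 := by
    rw [Set.uIcc_of_le hx0]; exact fun t ht => ht.1
  have hgi : IntervalIntegrable g volume 0 x := (hgcont.mono hsub).intervalIntegrable
  have hpe : IntervalIntegrable (fun t : ℝ => p.eval (t:ℂ) * Complex.exp t) volume 0 x :=
    (((p.continuous_aeval).comp Complex.continuous_ofReal).mul
      (Complex.continuous_exp.comp Complex.continuous_ofReal)).intervalIntegrable 0 x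
  have hsplit : (∫ t in (0:ℝ)..x, f t)
      = (∫ t in (0:ℝ)..x, g t) + ∫ t in (0:ℝ)..x, p.eval (t:ℂ) * Complex.exp t := by
    rw [← intervalIntegral.integral_add hgi hpe]
    refine intervalIntegral.integral_congr fun t ht => ?_
    simp [hgdef]
  have hkey : (∫ t in (0:ℝ)..x, p.eval (t:ℂ) * Complex.exp t)
      = P.eval (x:ℂ) * Complex.exp x - P.eval 0 := by
    rw [← hPsum]; exact integral_poly_exp P x
  have hev : P.eval (x:ℂ) + (Polynomial.derivative P).eval (x:ℂ) = p.eval (x:ℂ) := by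
    rw [← Polynomial.eval_add, hPsum]
  show g x - Pop g x + P.eval 0
      = Lop f x - (Polynomial.derivative P).eval (x:ℂ) * Complex.exp x
  simp only [Lop, Pop]
  rw [hsplit, hkey]
  simp only [hgdef]
  linear_combination Complex.exp (x:ℂ) * hev
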